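/- arXiv:2307.10572 — 5 statements merged into one kernel-verified Lean document; each statement's English description precedes it below -/
import Mathlib

section
/- Consider a multi-layer ScBM with population matrices P_l = ρ Y B_l Zᵀ for l = 1,…,L, and suppose the rank of Σ_{l=1}^L B_l B_lᵀ equals K_y (the full-rank case K = K_y). Let U ∈ ℝ^{n×K_y} be any matrix with orthonormal columns and Λ a K_y×K_y invertible diagonal matrix such that Σ_{l=1}^L P_l P_lᵀ = U Λ Uᵀ. Then for all nodes i, j ∈ [n]: Y_{i∗} = Y_{j∗} if and only if U_{i∗} = U_{j∗}; moreover, whenever Y_{i∗} ≠ Y_{j∗}, one has ‖U_{i∗} − U_{j∗}‖₂ = √(1/n_{g_i^y} + 1/n_{g_j^y}). -/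
open Matrix Finset
open scoped BigOperators Classical

noncomputable section

/-- Row membership matrix associated with a cluster assignment `g`. -/
def memb {n K : ℕ} (g : Fin n → Fin K) : Matrix (Fin n) (Fin K) ℝ :=
  Matrix.of fun i k => if g i = k then 1 else 0

/-- Size of cluster `k` under assignment `g`. -/
def csize {n K : ℕ} (g : Fin n → Fin K) (k : Fin K) : ℕ :=
  (Finset.univ.filter fun i => g i = k).card

/-- Euclidean distance between the `i`-th and `j`-th rows of `M`. -/
def rowDist {n K : ℕ} (M : Matrix (Fin n) (Fin K) ℝ) (i j : Fin n) : ℝ :=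
  Real.sqrt (∑ m, (M i m - M j m) ^ 2)

-- auxiliary lemmas
lemma memb_row_eq_iff {n K : ℕ} (g : Fin n → Fin K) (i j : Fin n) :
    memb g i = memb g j ↔ g i = g j := by
  constructor
  · intro h
    have h2 := congrFun h (g i)
    simp [memb] at h2
    by_contra hne
    exact hne h2.symm
  · intro h; funext k; simp [memb, h]

lemma YtY {n K : ℕ} (g : Fin n → Fin K) :
    (memb g)ᵀ * memb g = Matrix.diagonal (fun k => (csize g k : ℝ)) := by
  ext k m
  simp only [Matrix.mul_apply, Matrix.transpose_apply, memb, Matrix.of_apply,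
    Matrix.diagonal_apply]
  by_cases h : k = m
  · subst h
    simp only [if_pos, mul_ite, mul_one, mul_zero, ite_mul, one_mul, zero_mul]
    rw [csize]
    have h1 : ∀ x : Fin n, (if g x = k then if g x = k then (1:ℝ) else 0 else 0)
        = if g x = k then 1 else 0 := by intro x; by_cases h : g x = k <;> simp [h]
    rw [Finset.sum_congr rfl (fun x _ => h1 x), Finset.sum_boole]
  · rw [if_neg h]
    apply Finset.sum_eq_zero
    intro x _
    by_cases hx : g x = k
    · rw [if_pos hx, if_neg (by rw [hx]; exact h), one_mul]
    · rw [if_neg hx, zero_mul]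

/-- full-rank case of Lemma 2.1 (row clusters). -/
theorem stmt0
    (n L Ky Kz : ℕ) (hn : 0 < n) (hL : 0 < L)
    (ρ : ℝ) (hρ0 : 0 < ρ) (hρ1 : ρ ≤ 1)
    (gy : Fin n → Fin Ky) (gz : Fin n → Fin Kz)
    (hny : ∀ k, 0 < csize gy k) (hnz : ∀ k, 0 < csize gz k)
    (B : Fin L → Matrix (Fin Ky) (Fin Kz) ℝ)
    (hB : ∀ l a b, 0 ≤ B l a b ∧ B l a b ≤ 1)
    (P : Fin L → Matrix (Fin n) (Fin n) ℝ)
    (hP : ∀ l, P l = ρ • (memb gy * B l * (memb gz)ᵀ))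
    -- full-rank case: rank(∑ B_l B_lᵀ) = K_y
    (hrank : (∑ l, B l * (B l)ᵀ).rank = Ky)
    -- eigendecomposition ∑ P_l P_lᵀ = U Λ Uᵀ with U column-orthonormal, Λ invertible diagonal
    (U : Matrix (Fin n) (Fin Ky) ℝ) (hUorth : Uᵀ * U = 1)
    (d : Fin Ky → ℝ) (hd : ∀ m, d m ≠ 0)
    (hdecomp : ∑ l, P l * (P l)ᵀ = U * Matrix.diagonal d * Uᵀ)
    (i j : Fin n) :
    (memb gy i = memb gy j ↔ U i = U j) ∧
      (memb gy i ≠ memb gy j →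
        rowDist U i j =
          Real.sqrt (1 / (csize gy (gy i) : ℝ) + 1 / (csize gy (gy j) : ℝ))) := by
  classical
  set Z := memb gz with hZdef
  set Y := memb gy with hYdef
  set Dinv : Matrix (Fin Ky) (Fin Ky) ℝ := Matrix.diagonal fun m => (d m)⁻¹ with hDinvdef
  have hDD : Matrix.diagonal d * Dinv = 1 := by
    rw [hDinvdef, Matrix.diagonal_mul_diagonal,
      show (fun m => d m * (d m)⁻¹) = fun _ => (1:ℝ) from funext fun m => mul_inv_cancel₀ (hd m),
      Matrix.diagonal_one]
  have hPl : ∀ l, P l = Y * (ρ • (B l * Zᵀ)) := by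
    intro l
    rw [hP l, Matrix.mul_smul, Matrix.mul_assoc]
  set M : Matrix (Fin Ky) (Fin n) ℝ := ∑ l, (ρ • (B l * Zᵀ)) * (P l)ᵀ with hMdef
  have hA : ∑ l, P l * (P l)ᵀ = Y * M := by
    rw [hMdef, Matrix.mul_sum]
    exact Finset.sum_congr rfl fun l _ => by rw [hPl l, Matrix.mul_assoc]
  set W : Matrix (Fin Ky) (Fin Ky) ℝ := M * U * Dinv with hWdef
  have hUYW : U = Y * W := by
    have h1 : (∑ l, P l * (P l)ᵀ) * U * Dinv = U := by
      rw [hdecomp, Matrix.mul_assoc (U * Matrix.diagonal d), hUorth, Matrix.mul_one,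
        Matrix.mul_assoc, hDD, Matrix.mul_one]
    rw [hA] at h1
    rw [hWdef, ← Matrix.mul_assoc, ← Matrix.mul_assoc]
    exact h1.symm
  have hcpos : ∀ k, (0:ℝ) < (csize gy k : ℝ) := fun k => by exact_mod_cast hny k
  set s : Fin Ky → ℝ := fun k => Real.sqrt (csize gy k) with hsdef
  have hspos : ∀ k, 0 < s k := fun k => Real.sqrt_pos.mpr (hcpos k)
  have hss : ∀ k, s k * s k = (csize gy k : ℝ) := fun k => Real.mul_self_sqrt (hcpos k).le
  set S : Matrix (Fin Ky) (Fin Ky) ℝ := Matrix.diagonal s with hSdef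
  set Sinv : Matrix (Fin Ky) (Fin Ky) ℝ := Matrix.diagonal fun k => (s k)⁻¹ with hSinvdef
  have hSSi : S * Sinv = 1 := by
    rw [hSdef, hSinvdef, Matrix.diagonal_mul_diagonal,
      show (fun k => s k * (s k)⁻¹) = fun _ => (1:ℝ) from
        funext fun k => mul_inv_cancel₀ (hspos k).ne', Matrix.diagonal_one]
  have hSiS : Sinv * S = 1 := by
    rw [hSdef, hSinvdef, Matrix.diagonal_mul_diagonal,
      show (fun k => (s k)⁻¹ * s k) = fun _ => (1:ℝ) from
        funext fun k => inv_mul_cancel₀ (hspos k).ne', Matrix.diagonal_one]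
  have hWYYW : Wᵀ * ((Yᵀ * Y) * W) = 1 := by
    have h := hUorth
    rw [hUYW, Matrix.transpose_mul] at h
    simpa [Matrix.mul_assoc] using h
  have hVtV : (S * W)ᵀ * (S * W) = 1 := by
    rw [Matrix.transpose_mul, hSdef, Matrix.diagonal_transpose]
    have h1 : Matrix.diagonal s * (Matrix.diagonal s * W)
        = (Yᵀ * Y) * W := by
      rw [← Matrix.mul_assoc, Matrix.diagonal_mul_diagonal, hYdef, YtY,
        show (fun k => s k * s k) = fun k => ((csize gy k : ℝ)) from funext hss]
    rw [Matrix.mul_assoc, h1, hWYYW]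
  have hVVt : (S * W) * (S * W)ᵀ = 1 := mul_eq_one_comm.mp hVtV
  have hWWt : W * Wᵀ = Matrix.diagonal fun k => ((csize gy k : ℝ))⁻¹ := by
    have hSt : Sᵀ = S := by rw [hSdef, Matrix.diagonal_transpose]
    have h1 : S * (W * Wᵀ) * S = 1 := by
      have h := hVVt
      rw [Matrix.transpose_mul, hSt] at h
      simp only [Matrix.mul_assoc] at h ⊢
      exact h
    have h3 : Sinv * (S * (W * Wᵀ) * S) * Sinv = W * Wᵀ := by
      rw [← Matrix.mul_assoc Sinv (S * (W * Wᵀ)) S, ← Matrix.mul_assoc Sinv S (W * Wᵀ),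
        hSiS, Matrix.one_mul, Matrix.mul_assoc, hSSi, Matrix.mul_one]
    rw [← h3, h1, Matrix.mul_one, hSinvdef, Matrix.diagonal_mul_diagonal,
      show (fun k => (s k)⁻¹ * (s k)⁻¹) = fun k => ((csize gy k : ℝ))⁻¹ from
        funext fun k => by rw [← mul_inv, hss]]
  have hWent : ∀ a b, (∑ t, W a t * W b t) = if a = b then ((csize gy a : ℝ))⁻¹ else 0 := by
    intro a b
    have h := congrFun (congrFun hWWt a) b
    simpa [Matrix.mul_apply, Matrix.diagonal_apply] using h
  have hUrow : ∀ (i : Fin n) (m : Fin Ky), U i m = W (gy i) m := by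
    intro i m
    rw [hUYW]
    simp [Matrix.mul_apply, hYdef, memb, ite_mul]
  have key1 : gy i = gy j ↔ U i = U j := by
    constructor
    · intro h; funext m; rw [hUrow, hUrow, h]
    · intro h
      by_contra hne
      have h1 : (∑ t, W (gy i) t * W (gy j) t) = 0 := by rw [hWent, if_neg hne]
      have h2 : (∑ t, W (gy i) t * W (gy i) t) = ((csize gy (gy i) : ℝ))⁻¹ := by
        rw [hWent, if_pos rfl]
      have h3 : ∀ t, W (gy j) t = W (gy i) t := fun t => by
        rw [← hUrow, ← hUrow, h]
      rw [Finset.sum_congr rfl (fun t _ => by rw [h3 t])] at h1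
      rw [h1] at h2
      exact inv_ne_zero (hcpos (gy i)).ne' h2.symm
  constructor
  · rw [memb_row_eq_iff]; exact key1
  · intro hmne
    have hne : gy i ≠ gy j := fun h => hmne ((memb_row_eq_iff gy i j).mpr h)
    have hsum : ∑ m, (U i m - U j m) ^ 2
        = 1 / (csize gy (gy i) : ℝ) + 1 / (csize gy (gy j) : ℝ) := by
      have hexp : ∀ m, (U i m - U j m) ^ 2
          = W (gy i) m * W (gy i) m - 2 * (W (gy i) m * W (gy j) m)
            + W (gy j) m * W (gy j) m := by
        intro m; rw [hUrow, hUrow]; ring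
      rw [Finset.sum_congr rfl fun m _ => hexp m, Finset.sum_add_distrib,
        Finset.sum_sub_distrib, ← Finset.mul_sum, hWent, hWent, hWent,
        if_pos rfl, if_pos rfl, if_neg hne]
      rw [one_div, one_div]
      ring
    rw [rowDist, hsum]
end
end

section
/- Consider a multi-layer ScBM with population matrices P_l = ρ Y B_l Zᵀ, and suppose the rank of Σ_{l=1}^L B_lᵀ B_l equals K_z (the full-rank case K' = K_z). Let V ∈ ℝ^{n×K_z} be any matrix with orthonormal columns and Λ a K_z×K_z invertible diagonal matrix such that Σ_{l=1}^L P_lᵀ P_l = V Λ Vᵀ. Then for all nodes i, j ∈ [n]: Z_{i∗} = Z_{j∗} if and only if V_{i∗} = V_{j∗}; moreover, whenever Z_{i∗} ≠ Z_{j∗}, one has ‖V_{i∗} − V_{j∗}‖₂ = √(1/n_{g_i^z} + 1/n_{g_j^z}). -/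
open Matrix Finset
open scoped BigOperators Classical

noncomputable section

/-- full-rank case of Lemma 2.3 (column clusters). -/
theorem stmt3
    (n L Ky Kz : ℕ) (hn : 0 < n) (hL : 0 < L)
    (ρ : ℝ) (hρ0 : 0 < ρ) (hρ1 : ρ ≤ 1)
    (gy : Fin n → Fin Ky) (gz : Fin n → Fin Kz)
    (hny : ∀ k, 0 < csize gy k) (hnz : ∀ k, 0 < csize gz k)
    (B : Fin L → Matrix (Fin Ky) (Fin Kz) ℝ)
    (hB : ∀ l a b, 0 ≤ B l a b ∧ B l a b ≤ 1)
    (P : Fin L → Matrix (Fin n) (Fin n) ℝ)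
    (hP : ∀ l, P l = ρ • (memb gy * B l * (memb gz)ᵀ))
    -- full-rank case: rank(∑ B_lᵀ B_l) = K_z
    (hrank : (∑ l, (B l)ᵀ * B l).rank = Kz)
    -- eigendecomposition ∑ P_lᵀ P_l = V Λ Vᵀ with V column-orthonormal, Λ invertible diagonal
    (V : Matrix (Fin n) (Fin Kz) ℝ) (hVorth : Vᵀ * V = 1)
    (d : Fin Kz → ℝ) (hd : ∀ m, d m ≠ 0)
    (hdecomp : ∑ l, (P l)ᵀ * P l = V * Matrix.diagonal d * Vᵀ)
    (i j : Fin n) :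
    (memb gz i = memb gz j ↔ V i = V j) ∧
      (memb gz i ≠ memb gz j →
        rowDist V i j =
          Real.sqrt (1 / (csize gz (gz i) : ℝ) + 1 / (csize gz (gz j) : ℝ))) := by
  classical
  set Zm : Matrix (Fin n) (Fin Kz) ℝ := memb gz with hZm
  set c : Fin Kz → ℝ := fun k => (csize gz k : ℝ) with hcdef
  have hc : ∀ k, 0 < c k := by
    intro k; simp only [hcdef]; exact_mod_cast hnz k
  -- Z^T Z = diagonal c
  have hZZ : Zmᵀ * Zm = Matrix.diagonal c := by
    ext k k'
    simp only [Matrix.mul_apply, Matrix.transpose_apply, hZm, memb, Matrix.of_apply,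
      Matrix.diagonal_apply]
    by_cases h : k = k'
    · subst h
      rw [if_pos rfl]
      have h1 : ∀ i : Fin n, (if gz i = k then (1:ℝ) else 0) * (if gz i = k then 1 else 0)
          = if gz i = k then 1 else 0 := by intro i; split_ifs <;> ring
      rw [Finset.sum_congr rfl fun i _ => h1 i, Finset.sum_boole]
      simp [hcdef, csize]
    · rw [if_neg h]
      apply Finset.sum_eq_zero
      intro x _
      by_cases h1 : gz x = k <;> by_cases h2 : gz x = k' <;> simp_all
  -- sum of P^T P = Zm * A * Zm^T
  set A : Matrix (Fin Kz) (Fin Kz) ℝ :=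
    ∑ l, (ρ ^ 2) • ((B l)ᵀ * ((memb gy)ᵀ * memb gy) * B l) with hA
  have key : ∀ l, (P l)ᵀ * P l
      = Zm * ((ρ ^ 2) • ((B l)ᵀ * ((memb gy)ᵀ * memb gy) * B l)) * Zmᵀ := by
    intro l
    rw [hP l]
    simp only [Matrix.transpose_smul, Matrix.transpose_mul, Matrix.transpose_transpose,
      Matrix.smul_mul, Matrix.mul_smul, smul_smul, Matrix.mul_assoc, ← sq, hZm]
  have hsum : ∑ l, (P l)ᵀ * P l = Zm * A * Zmᵀ := by
    rw [Finset.sum_congr rfl fun l _ => key l, ← Matrix.sum_mul, ← Matrix.mul_sum, hA]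
  -- V = Zm * Q for some square matrix Q
  obtain ⟨Q, hVZQ⟩ : ∃ Q : Matrix (Fin Kz) (Fin Kz) ℝ, V = Zm * Q := by
    refine ⟨A * Zmᵀ * V * Matrix.diagonal (fun m => (d m)⁻¹), ?_⟩
    have hdinv : Matrix.diagonal d * Matrix.diagonal (fun m => (d m)⁻¹)
        = (1 : Matrix (Fin Kz) (Fin Kz) ℝ) := by
      rw [Matrix.diagonal_mul_diagonal]
      have : (fun m => d m * (d m)⁻¹) = fun _ : Fin Kz => (1:ℝ) := by
        funext m; exact mul_inv_cancel₀ (hd m)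
      rw [this, Matrix.diagonal_one]
    have h1 : V * Matrix.diagonal d = Zm * A * Zmᵀ * V := by
      calc V * Matrix.diagonal d = V * Matrix.diagonal d * (Vᵀ * V) := by
            rw [hVorth, Matrix.mul_one]
        _ = V * Matrix.diagonal d * Vᵀ * V := by rw [Matrix.mul_assoc (V * Matrix.diagonal d)]
        _ = (∑ l, (P l)ᵀ * P l) * V := by rw [hdecomp]
        _ = Zm * A * Zmᵀ * V := by rw [hsum]
    calc V = V * (1 : Matrix (Fin Kz) (Fin Kz) ℝ) := by rw [Matrix.mul_one]
      _ = V * (Matrix.diagonal d * Matrix.diagonal (fun m => (d m)⁻¹)) := by rw [hdinv]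
      _ = V * Matrix.diagonal d * Matrix.diagonal (fun m => (d m)⁻¹) := by
            rw [Matrix.mul_assoc]
      _ = Zm * A * Zmᵀ * V * Matrix.diagonal (fun m => (d m)⁻¹) := by rw [h1]
      _ = Zm * (A * Zmᵀ * V * Matrix.diagonal (fun m => (d m)⁻¹)) := by
            simp only [Matrix.mul_assoc]
  have hrow : ∀ (i : Fin n) (m : Fin Kz), V i m = Q (gz i) m := by
    intro i m
    rw [hVZQ]
    simp only [Matrix.mul_apply, hZm, memb, Matrix.of_apply, ite_mul, one_mul, zero_mul]
    simp [Finset.sum_ite_eq]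
  -- Q^T diag c Q = 1
  have hQc : Qᵀ * Matrix.diagonal c * Q = 1 := by
    have h2 : (Zm * Q)ᵀ * (Zm * Q) = 1 := by rw [← hVZQ]; exact hVorth
    rw [Matrix.transpose_mul] at h2
    rw [← hZZ]
    simp only [Matrix.mul_assoc] at h2 ⊢
    exact h2
  set s : Fin Kz → ℝ := fun k => Real.sqrt (c k) with hsdef
  have hs : ∀ k, 0 < s k := fun k => Real.sqrt_pos.2 (hc k)
  have hss : ∀ k, s k * s k = c k := fun k => Real.mul_self_sqrt (hc k).le
  have hUU : (Matrix.diagonal s * Q)ᵀ * (Matrix.diagonal s * Q) = 1 := by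
    rw [Matrix.transpose_mul, Matrix.diagonal_transpose]
    have hss' : Matrix.diagonal s * Matrix.diagonal s = Matrix.diagonal c := by
      rw [Matrix.diagonal_mul_diagonal]; exact congrArg _ (funext hss)
    calc Qᵀ * Matrix.diagonal s * (Matrix.diagonal s * Q)
        = Qᵀ * (Matrix.diagonal s * Matrix.diagonal s) * Q := by
          simp only [Matrix.mul_assoc]
      _ = Qᵀ * Matrix.diagonal c * Q := by rw [hss']
      _ = 1 := hQc
  have hUUt : (Matrix.diagonal s * Q) * (Matrix.diagonal s * Q)ᵀ = 1 :=
    mul_eq_one_comm.mp hUU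
  have hinn : ∀ k k', s k * s k' * (∑ m, Q k m * Q k' m)
      = if k = k' then (1:ℝ) else 0 := by
    intro k k'
    have h1 : ((Matrix.diagonal s * Q) * (Matrix.diagonal s * Q)ᵀ) k k'
        = (1 : Matrix (Fin Kz) (Fin Kz) ℝ) k k' := by rw [hUUt]
    rw [Matrix.one_apply] at h1
    rw [Matrix.mul_apply] at h1
    have h2 : ∀ m, (Matrix.diagonal s * Q) k m * (Matrix.diagonal s * Q)ᵀ m k'
        = s k * s k' * (Q k m * Q k' m) := by
      intro m
      rw [Matrix.transpose_apply, Matrix.diagonal_mul, Matrix.diagonal_mul]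
      ring
    rw [Finset.sum_congr rfl fun m _ => h2 m, ← Finset.mul_sum] at h1
    exact h1
  have hdiag : ∀ k, ∑ m, Q k m * Q k m = (c k)⁻¹ := by
    intro k
    have h1 := hinn k k
    rw [if_pos rfl, hss] at h1
    exact (inv_eq_of_mul_eq_one_right h1).symm
  have hoff : ∀ k k', k ≠ k' → ∑ m, Q k m * Q k' m = 0 := by
    intro k k' hkk
    have h1 := hinn k k'
    rw [if_neg hkk] at h1
    have h2 : s k * s k' ≠ 0 := (mul_pos (hs k) (hs k')).ne' 
    exact (mul_eq_zero.mp h1).resolve_left h2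
  -- memb rows equal iff gz equal
  have hmemb : memb gz i = memb gz j ↔ gz i = gz j := by
    constructor
    · intro h
      have h1 := congrFun h (gz i)
      simp only [memb, Matrix.of_apply, if_pos rfl] at h1
      by_cases h2 : gz j = gz i
      · exact h2.symm
      · rw [if_neg h2] at h1; norm_num at h1
    · intro h; funext k; simp [memb, h]
  have hgzV : gz i = gz j → V i = V j := by
    intro h; funext m; rw [hrow, hrow, h]
  have hVgz : V i = V j → gz i = gz j := by
    intro h
    by_contra hne
    have hQrow : ∀ m, Q (gz i) m = Q (gz j) m := by
      intro m; rw [← hrow, ← hrow, h]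
    have h1 : ∑ m, Q (gz i) m * Q (gz i) m = 0 := by
      calc ∑ m, Q (gz i) m * Q (gz i) m = ∑ m, Q (gz i) m * Q (gz j) m := by
            exact Finset.sum_congr rfl fun m _ => by rw [hQrow m]
        _ = 0 := hoff _ _ hne
    rw [hdiag] at h1
    exact absurd h1 (inv_ne_zero (hc _).ne')
  refine ⟨⟨fun h => hgzV (hmemb.mp h), fun h => hmemb.mpr (hVgz h)⟩, ?_⟩
  intro hne
  have hgne : gz i ≠ gz j := fun h => hne (hmemb.mpr h)
  have hsumval : ∑ m, (V i m - V j m) ^ 2 = (c (gz i))⁻¹ + (c (gz j))⁻¹ := by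
    have h1 : ∀ m, (V i m - V j m) ^ 2
        = Q (gz i) m * Q (gz i) m - 2 * (Q (gz i) m * Q (gz j) m)
          + Q (gz j) m * Q (gz j) m := by
      intro m; rw [hrow i m, hrow j m]; ring
    rw [Finset.sum_congr rfl fun m _ => h1 m]
    rw [Finset.sum_add_distrib, Finset.sum_sub_distrib, ← Finset.mul_sum,
      hdiag, hdiag, hoff _ _ hgne]
    ring
  rw [rowDist, hsumval]
  congr 1
  rw [hcdef]
  simp [one_div]
end
end

section
/- Let H be an n×s real matrix of full column rank such that the s-th largest eigenvalue of H Hᵀ is at least h for some h > 0, and let G be an s×s real symmetric matrix with rank(G) = j ≤ s whose j-th largest eigenvalue is at least g for some g > 0. Then the j-th largest eigenvalue of H G Hᵀ satisfies λ_j(H G Hᵀ) ≥ h g. -/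
open Matrix Finset
open scoped BigOperators Classical

noncomputable section

section Helpers

lemma dot_shift {m k : ℕ} (A : Matrix (Fin m) (Fin k) ℝ) (x : Fin m → ℝ) (v : Fin k → ℝ) :
    x ⬝ᵥ (A *ᵥ v) = (Aᵀ *ᵥ x) ⬝ᵥ v := by
  rw [dotProduct_mulVec, mulVec_transpose]

lemma dot_self_nonneg {m : ℕ} (v : Fin m → ℝ) : 0 ≤ v ⬝ᵥ v :=
  Finset.sum_nonneg fun i _ => mul_self_nonneg _

lemma norm_U {n : ℕ} (U : Matrix (Fin n) (Fin n) ℝ) (hU : U * Uᵀ = 1) (x : Fin n → ℝ) :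
    (Uᵀ *ᵥ x) ⬝ᵥ (Uᵀ *ᵥ x) = x ⬝ᵥ x := by
  rw [dotProduct_mulVec, mulVec_transpose, vecMul_vecMul, hU, vecMul_one]

lemma quad_diag {n : ℕ} (U : Matrix (Fin n) (Fin n) ℝ) (d : Fin n → ℝ) (x : Fin n → ℝ) :
    x ⬝ᵥ ((U * diagonal d * Uᵀ) *ᵥ x) = ∑ i : Fin n, d i * ((Uᵀ *ᵥ x) i) ^ 2 := by
  rw [← mulVec_mulVec, ← mulVec_mulVec, dotProduct_mulVec (A := U)]
  rw [show x ᵥ* U = Uᵀ *ᵥ x from (mulVec_transpose U x).symm]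
  simp only [dotProduct, mulVec_diagonal]
  exact Finset.sum_congr rfl fun i _ => by ring

lemma real_spectral {n : ℕ} {M : Matrix (Fin n) (Fin n) ℝ} (hM : M.IsHermitian) :
    M = (hM.eigenvectorUnitary : Matrix (Fin n) (Fin n) ℝ) * diagonal hM.eigenvalues *
      (hM.eigenvectorUnitary : Matrix (Fin n) (Fin n) ℝ)ᵀ := by
  have := hM.spectral_theorem
  simpa [Matrix.star_eq_conjTranspose, Matrix.conjTranspose_eq_transpose_of_trivial] using this

lemma unitary_tmul {n : ℕ} {M : Matrix (Fin n) (Fin n) ℝ} (hM : M.IsHermitian) :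
    (hM.eigenvectorUnitary : Matrix (Fin n) (Fin n) ℝ)ᵀ *
      (hM.eigenvectorUnitary : Matrix (Fin n) (Fin n) ℝ) = 1 := by
  have := hM.eigenvectorUnitary.2
  rw [Matrix.mem_unitaryGroup_iff'] at this
  simpa [Matrix.star_eq_conjTranspose, Matrix.conjTranspose_eq_transpose_of_trivial] using this

lemma unitary_mult {n : ℕ} {M : Matrix (Fin n) (Fin n) ℝ} (hM : M.IsHermitian) :
    (hM.eigenvectorUnitary : Matrix (Fin n) (Fin n) ℝ) *
      (hM.eigenvectorUnitary : Matrix (Fin n) (Fin n) ℝ)ᵀ = 1 := by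
  have := hM.eigenvectorUnitary.2
  rw [Matrix.mem_unitaryGroup_iff] at this
  simpa [Matrix.star_eq_conjTranspose, Matrix.conjTranspose_eq_transpose_of_trivial] using this

/-- quadratic form of a hermitian matrix in eigen-coordinates -/
lemma quad_eig {n : ℕ} {M : Matrix (Fin n) (Fin n) ℝ} (hM : M.IsHermitian) (x : Fin n → ℝ) :
    x ⬝ᵥ (M *ᵥ x) = ∑ i : Fin n,
      hM.eigenvalues i * (((hM.eigenvectorUnitary : Matrix (Fin n) (Fin n) ℝ)ᵀ *ᵥ x) i) ^ 2 := by
  conv_lhs => rw [real_spectral hM]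
  exact quad_diag _ _ x

lemma normsq_eig {n : ℕ} {M : Matrix (Fin n) (Fin n) ℝ} (hM : M.IsHermitian) (x : Fin n → ℝ) :
    x ⬝ᵥ x = ∑ i : Fin n,
      (((hM.eigenvectorUnitary : Matrix (Fin n) (Fin n) ℝ)ᵀ *ᵥ x) i) ^ 2 := by
  rw [← norm_U _ (unitary_mult hM) x]
  simp [dotProduct, sq]

/-- counting lemma: an injective `K` whose image has quadratic form ≥ c forces
at least `j` eigenvalues ≥ c. -/
lemma count_ge {n j : ℕ} {M : Matrix (Fin n) (Fin n) ℝ} (hM : M.IsHermitian) {c : ℝ}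
    (K : Matrix (Fin n) (Fin j) ℝ) (hK : Function.Injective K.mulVec)
    (hq : ∀ z : Fin j → ℝ, c * ((K *ᵥ z) ⬝ᵥ (K *ᵥ z)) ≤ (K *ᵥ z) ⬝ᵥ (M *ᵥ (K *ᵥ z))) :
    j ≤ (Finset.univ.filter fun i : Fin n => c ≤ hM.eigenvalues i).card := by
  by_contra hlt
  push_neg at hlt
  set U : Matrix (Fin n) (Fin n) ℝ := (hM.eigenvectorUnitary : Matrix (Fin n) (Fin n) ℝ) with hUdef
  set S := (Finset.univ.filter fun i : Fin n => c ≤ hM.eigenvalues i) with hSdef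
  set Q : Matrix {i // i ∈ S} (Fin j) ℝ := (Uᵀ * K).submatrix Subtype.val id with hQdef
  have hni : ¬ Function.Injective Q.mulVecLin := by
    intro hinj
    have h1 := LinearMap.finrank_le_finrank_of_injective hinj
    simp only [Module.finrank_pi, Fintype.card_fin, Fintype.card_coe] at h1
    omega
  rw [← LinearMap.ker_eq_bot] at hni
  obtain ⟨z, hzker, hz0⟩ := (Submodule.ne_bot_iff _).mp hni
  have hzS : ∀ i (hi : i ∈ S), (Uᵀ *ᵥ (K *ᵥ z)) i = 0 := by
    intro i hi
    have h1 : Q *ᵥ z = 0 := hzker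
    have h2 := congrFun h1 ⟨i, hi⟩
    rw [mulVec_mulVec]
    simpa [hQdef, Matrix.mulVec, dotProduct] using h2
  set x := K *ᵥ z with hxdef
  set w := Uᵀ *ᵥ x with hwdef
  have hx0 : x ≠ 0 := by
    intro hx
    exact hz0 (hK (by rw [← hxdef, hx, mulVec_zero]))
  have hw0 : w ≠ 0 := by
    intro hw
    apply hx0
    have h3 : U *ᵥ w = x := by
      rw [hwdef, mulVec_mulVec, unitary_mult hM, one_mulVec]
    rw [← h3, hw, mulVec_zero]
  obtain ⟨i0, hi0⟩ := Function.ne_iff.mp hw0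
  have hi0S : i0 ∉ S := fun hmem => hi0 (hzS i0 hmem)
  have hi0c : hM.eigenvalues i0 < c := by
    by_contra hc
    push_neg at hc
    exact hi0S (by simp [hSdef, hc])
  have hlt2 : ∑ i : Fin n, hM.eigenvalues i * (w i) ^ 2 < ∑ i : Fin n, c * (w i) ^ 2 := by
    apply Finset.sum_lt_sum
    · intro i _
      by_cases hiS : i ∈ S
      · rw [hzS i hiS]; ring_nf; exact le_refl _
      · have h4 : hM.eigenvalues i < c := by
          by_contra hc; push_neg at hc; exact hiS (by simp [hSdef, hc])
        exact mul_le_mul_of_nonneg_right h4.le (sq_nonneg _)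
    · exact ⟨i0, Finset.mem_univ _, by
        apply mul_lt_mul_of_pos_right hi0c
        have h3 : w i0 ≠ 0 := by simpa using hi0
        positivity⟩
  have e1 : x ⬝ᵥ (M *ᵥ x) = ∑ i : Fin n, hM.eigenvalues i * (w i) ^ 2 := quad_eig hM x
  have e2 : x ⬝ᵥ x = ∑ i : Fin n, (w i) ^ 2 := normsq_eig hM x
  have h5 := hq z
  rw [← hxdef, e1, e2, Finset.mul_sum] at h5
  exact absurd (lt_of_le_of_lt h5 hlt2) (lt_irrefl _)

/-- the filter of eigenvalues ≥ v equals the filter of nonzero eigenvalues,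
under the rank/count hypotheses -/
lemma eig_filter_eq {n r : ℕ} {M : Matrix (Fin n) (Fin n) ℝ} (hM : M.IsHermitian) {v : ℝ}
    (hv : 0 < v) (hrank : M.rank = r)
    (hcount : r ≤ (Finset.univ.filter fun i : Fin n => v ≤ hM.eigenvalues i).card) :
    (Finset.univ.filter fun i : Fin n => v ≤ hM.eigenvalues i)
      = (Finset.univ.filter fun i : Fin n => hM.eigenvalues i ≠ 0) := by
  have hcard : (Finset.univ.filter fun i : Fin n => hM.eigenvalues i ≠ 0).card = r := by
    have h1 := hM.rank_eq_card_non_zero_eigs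
    rw [hrank, Fintype.card_subtype] at h1
    exact h1.symm
  apply Finset.eq_of_subset_of_card_le
  · intro i hi
    simp only [Finset.mem_filter, Finset.mem_univ, true_and] at hi ⊢
    intro h0
    rw [h0] at hi; linarith
  · rw [hcard]; exact hcount

lemma quad_congr {m k : ℕ} (P : Matrix (Fin m) (Fin k) ℝ) (M : Matrix (Fin m) (Fin m) ℝ)
    (z : Fin k → ℝ) :
    z ⬝ᵥ ((Pᵀ * M * P) *ᵥ z) = (P *ᵥ z) ⬝ᵥ (M *ᵥ (P *ᵥ z)) := by
  rw [Matrix.mul_assoc, ← mulVec_mulVec, dot_shift, transpose_transpose, ← mulVec_mulVec]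

end Helpers

/-- Lemma A.2 (lower bound on the j-th largest eigenvalue of H G Hᵀ).
The property "the j-th largest eigenvalue of a symmetric matrix M is at least v"
is encoded as: at least j of the eigenvalues of M (with multiplicity) are ≥ v. -/
theorem stmt6
    (n s j : ℕ) (hj : j ≤ s)
    (H : Matrix (Fin n) (Fin s) ℝ)
    (G : Matrix (Fin s) (Fin s) ℝ)
    (hGsymm : G.IsHermitian)
    (hHH : (H * Hᵀ).IsHermitian)
    (hHGH : (H * G * Hᵀ).IsHermitian)
    -- H has full column rank
    (hHrank : H.rank = s)
    -- the s-th largest eigenvalue of H Hᵀ is at least h > 0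
    (h : ℝ) (hh : 0 < h)
    (hHHeig : s ≤ (Finset.univ.filter fun i : Fin n => h ≤ hHH.eigenvalues i).card)
    -- rank(G) = j and the j-th largest eigenvalue of G is at least g > 0
    (hGrank : G.rank = j)
    (g : ℝ) (hg : 0 < g)
    (hGeig : j ≤ (Finset.univ.filter fun a : Fin s => g ≤ hGsymm.eigenvalues a).card) :
    -- conclusion: λ_j(H G Hᵀ) ≥ h g
    j ≤ (Finset.univ.filter fun i : Fin n => h * g ≤ hHGH.eigenvalues i).card := by
  classical
  -- B = HᵀH is symmetric, full rank, invertible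
  set B : Matrix (Fin s) (Fin s) ℝ := Hᵀ * H with hBdef
  have hBherm : B.IsHermitian := by simpa [Matrix.conjTranspose_eq_transpose_of_trivial] using isHermitian_conjTranspose_mul_self H
  have hBrank : B.rank = s := by rw [hBdef, Matrix.rank_transpose_mul_self, hHrank]
  have hBt : Bᵀ = B := by rw [hBdef, transpose_mul, transpose_transpose]
  -- all eigenvalues of B are nonzero, so B is invertible
  have hBeig0 : ∀ i, hBherm.eigenvalues i ≠ 0 := by
    have h1 := hBherm.rank_eq_card_non_zero_eigs
    rw [hBrank, Fintype.card_subtype] at h1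
    have h2 : (Finset.univ.filter fun i : Fin s => hBherm.eigenvalues i ≠ 0) = Finset.univ :=
      Finset.eq_univ_of_card _ (by rw [← h1, Fintype.card_fin])
    intro i
    have := Finset.mem_filter.mp (h2 ▸ Finset.mem_univ i)
    exact this.2
  have hBdet : IsUnit B.det := by
    rw [isUnit_iff_ne_zero, hBherm.det_eq_prod_eigenvalues]
    push_cast
    exact Finset.prod_ne_zero_iff.mpr fun i _ => hBeig0 i
  have hBBinv : B * B⁻¹ = 1 := Matrix.mul_nonsing_inv B hBdet
  have hBinvB : B⁻¹ * B = 1 := Matrix.nonsing_inv_mul B hBdet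
  have hBinvt : B⁻¹ᵀ = B⁻¹ := by rw [Matrix.transpose_nonsing_inv, hBt]
  -- eigenvalue dichotomy for C = H Hᵀ
  have hCrank : (H * Hᵀ).rank = s := by rw [Matrix.rank_self_mul_transpose, hHrank]
  have hCfilter := eig_filter_eq hHH hh hCrank hHHeig
  have hCdich : ∀ i, hHH.eigenvalues i = 0 ∨ h ≤ hHH.eigenvalues i := by
    intro i
    by_cases h0 : hHH.eigenvalues i = 0
    · exact Or.inl h0
    · right
      have : i ∈ (Finset.univ.filter fun i : Fin n => hHH.eigenvalues i ≠ 0) := by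
        simp [h0]
      rw [← hCfilter] at this
      exact (Finset.mem_filter.mp this).2
  -- hC ⪯ C² :  h * xᵀCx ≤ ‖Cx‖²
  have hCC : ∀ x : Fin n → ℝ,
      h * (x ⬝ᵥ ((H * Hᵀ) *ᵥ x)) ≤ ((H * Hᵀ) *ᵥ x) ⬝ᵥ ((H * Hᵀ) *ᵥ x) := by
    intro x
    set U : Matrix (Fin n) (Fin n) ℝ := (hHH.eigenvectorUnitary : Matrix (Fin n) (Fin n) ℝ)
      with hUdef
    have hkey : Uᵀ *ᵥ ((H * Hᵀ) *ᵥ x) = fun i => hHH.eigenvalues i * (Uᵀ *ᵥ x) i := by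
      rw [mulVec_mulVec]
      have : Uᵀ * (H * Hᵀ) = diagonal hHH.eigenvalues * Uᵀ := by
        conv_lhs => rw [real_spectral hHH]
        rw [← hUdef, ← Matrix.mul_assoc, ← Matrix.mul_assoc, unitary_tmul hHH, one_mul]
      rw [this, ← mulVec_mulVec]
      funext i
      rw [mulVec_diagonal]
    rw [quad_eig hHH x, normsq_eig hHH ((H * Hᵀ) *ᵥ x), ← hUdef, hkey, Finset.mul_sum]
    apply Finset.sum_le_sum
    intro i _
    rcases hCdich i with h0 | hge
    · simp [h0]
    · have he : 0 ≤ hHH.eigenvalues i := le_trans hh.le hge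
      have : h * hHH.eigenvalues i ≤ hHH.eigenvalues i * hHH.eigenvalues i :=
        mul_le_mul_of_nonneg_right hge he
      calc h * (hHH.eigenvalues i * ((Uᵀ *ᵥ x) i) ^ 2)
          = (h * hHH.eigenvalues i) * ((Uᵀ *ᵥ x) i) ^ 2 := by ring
        _ ≤ (hHH.eigenvalues i * hHH.eigenvalues i) * ((Uᵀ *ᵥ x) i) ^ 2 :=
            mul_le_mul_of_nonneg_right this (sq_nonneg _)
        _ = (hHH.eigenvalues i * (Uᵀ *ᵥ x) i) ^ 2 := by ring
  -- B ⪰ h I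
  have hBlow : ∀ z : Fin s → ℝ, h * (z ⬝ᵥ z) ≤ z ⬝ᵥ (B *ᵥ z) := by
    intro z
    set w := B⁻¹ *ᵥ z with hwdef
    set x := H *ᵥ w with hxdef
    have h1 : Hᵀ *ᵥ x = z := by
      rw [hxdef, mulVec_mulVec, ← hBdef, hwdef, mulVec_mulVec, hBBinv, one_mulVec]
    have h2 : (H * Hᵀ) *ᵥ x = H *ᵥ z := by
      rw [← mulVec_mulVec, h1]
    have h3 : x ⬝ᵥ ((H * Hᵀ) *ᵥ x) = z ⬝ᵥ z := by
      rw [h2, dot_shift, h1]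
    have h4 : ((H * Hᵀ) *ᵥ x) ⬝ᵥ ((H * Hᵀ) *ᵥ x) = z ⬝ᵥ (B *ᵥ z) := by
      rw [h2, dot_shift, mulVec_mulVec, ← hBdef, dotProduct_comm]
    have := hCC x
    rw [h3, h4] at this
    exact this
  -- B⁻¹ ⪯ h⁻¹ I
  have hBinvlow : ∀ y : Fin s → ℝ, h * (y ⬝ᵥ (B⁻¹ *ᵥ y)) ≤ y ⬝ᵥ y := by
    intro y
    set w := B⁻¹ *ᵥ y with hwdef
    have hy : B *ᵥ w = y := by rw [hwdef, mulVec_mulVec, hBBinv, one_mulVec]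
    have hq0 : h * (w ⬝ᵥ w) ≤ w ⬝ᵥ y := by
      have := hBlow w
      rw [hy] at this
      exact this
    have hwy : y ⬝ᵥ (B⁻¹ *ᵥ y) = w ⬝ᵥ y := by rw [← hwdef, dotProduct_comm]
    have hwnn : 0 ≤ w ⬝ᵥ w := dot_self_nonneg w
    have hynn : 0 ≤ y ⬝ᵥ y := dot_self_nonneg y
    have hwynn : 0 ≤ w ⬝ᵥ y := le_trans (by positivity) hq0
    have hcs : (w ⬝ᵥ y) ^ 2 ≤ (w ⬝ᵥ w) * (y ⬝ᵥ y) := by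
      have := Finset.sum_mul_sq_le_sq_mul_sq Finset.univ w y
      simpa [dotProduct, sq] using this
    rw [hwy]
    rcases eq_or_lt_of_le hwynn with heq | hpos
    · rw [← heq]; simpa using hynn
    · nlinarith [mul_le_mul_of_nonneg_right hq0 hynn]
  -- G eigen-structure: pick j orthonormal eigenvectors with eigenvalue ≥ g
  have hGfilter := eig_filter_eq hGsymm hg hGrank hGeig
  have hGcard : (Finset.univ.filter fun a : Fin s => g ≤ hGsymm.eigenvalues a).card = j := by
    rw [hGfilter]
    have h1 := hGsymm.rank_eq_card_non_zero_eigs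
    rw [hGrank, Fintype.card_subtype] at h1
    omega
  set T := (Finset.univ.filter fun a : Fin s => g ≤ hGsymm.eigenvalues a) with hTdef
  set σ : Fin j → Fin s := fun a => ((T.orderIsoOfFin hGcard) a : Fin s) with hσdef
  have hσinj : Function.Injective σ := by
    intro a b hab
    exact (T.orderIsoOfFin hGcard).injective (Subtype.ext hab)
  have hσg : ∀ a, g ≤ hGsymm.eigenvalues (σ a) := by
    intro a
    have h5 : σ a ∈ T := ((T.orderIsoOfFin hGcard) a).2
    rw [hTdef] at h5
    exact (Finset.mem_filter.mp h5).2
  -- selection matrix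
  set Sel : Matrix (Fin s) (Fin j) ℝ := Matrix.of fun p a => if p = σ a then 1 else 0
    with hSeldef
  have hSelSel : Selᵀ * Sel = 1 := by
    ext a b
    simp only [Matrix.mul_apply, transpose_apply, hSeldef, Matrix.of_apply, one_apply,
      ite_mul, one_mul, zero_mul]
    rw [Finset.sum_ite_eq' Finset.univ (σ a) fun p => if p = σ b then 1 else 0]
    simp [hσinj.eq_iff]
  have hSelD : Selᵀ * diagonal hGsymm.eigenvalues * Sel
      = diagonal (fun a => hGsymm.eigenvalues (σ a)) := by
    ext a b
    simp only [Matrix.mul_apply, transpose_apply, hSeldef, Matrix.of_apply, diagonal_apply,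
      ite_mul, one_mul, zero_mul, mul_ite, mul_one, mul_zero]
    simp only [Finset.sum_ite_eq', Finset.mem_univ, if_true]
    by_cases hab : a = b
    · subst hab; simp
    · have hne : σ a ≠ σ b := fun hc => hab (hσinj hc)
      simp [hab, hne, hne.symm]
  -- eigenvector matrix of G
  set V : Matrix (Fin s) (Fin s) ℝ := (hGsymm.eigenvectorUnitary : Matrix (Fin s) (Fin s) ℝ)
    with hVdef
  have hVt : Vᵀ * V = 1 := unitary_tmul hGsymm
  have hGspec : G = V * diagonal hGsymm.eigenvalues * Vᵀ := real_spectral hGsymm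
  set P : Matrix (Fin s) (Fin j) ℝ := V * Sel with hPdef
  set K : Matrix (Fin n) (Fin j) ℝ := H * B⁻¹ * P with hKdef
  have hPtP : Pᵀ * P = 1 := by
    rw [hPdef, transpose_mul, Matrix.mul_assoc, ← Matrix.mul_assoc Vᵀ V Sel, hVt,
      Matrix.one_mul, hSelSel]
  have hPGP : Pᵀ * G * P = diagonal (fun a => hGsymm.eigenvalues (σ a)) := by
    rw [hPdef]
    conv_lhs => rw [hGspec]
    simp only [transpose_mul, Matrix.mul_assoc]
    rw [← Matrix.mul_assoc Vᵀ V, hVt, Matrix.one_mul, ← Matrix.mul_assoc Vᵀ V, hVt,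
      Matrix.one_mul, ← Matrix.mul_assoc, hSelD]
  have hHtK : Hᵀ * K = P := by
    have h1 : Hᵀ * (H * B⁻¹ * P) = (Hᵀ * H) * B⁻¹ * P := by simp only [Matrix.mul_assoc]
    rw [hKdef, h1, ← hBdef, hBBinv, Matrix.one_mul]
  have hKinj : Function.Injective K.mulVec := by
    have hLK : (Pᵀ * Hᵀ) * K = 1 := by rw [Matrix.mul_assoc, hHtK, hPtP]
    intro z1 z2 hz
    have h1 := congrArg (fun v => (Pᵀ * Hᵀ) *ᵥ v) hz
    simpa [mulVec_mulVec, hLK, one_mulVec] using h1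
  have hquad : ∀ z : Fin j → ℝ,
      (h * g) * ((K *ᵥ z) ⬝ᵥ (K *ᵥ z)) ≤ (K *ᵥ z) ⬝ᵥ ((H * G * Hᵀ) *ᵥ (K *ᵥ z)) := by
    intro z
    set x := K *ᵥ z with hxdef
    set y := P *ᵥ z with hydef
    have hHx : Hᵀ *ᵥ x = y := by rw [hxdef, mulVec_mulVec, hHtK, hydef]
    have hrhs : x ⬝ᵥ ((H * G * Hᵀ) *ᵥ x) = y ⬝ᵥ (G *ᵥ y) := by
      have h1 : (H * G * Hᵀ) *ᵥ x = H *ᵥ (G *ᵥ y) := by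
        rw [hxdef, hydef, ← hHtK]
        simp only [← mulVec_mulVec]
      rw [h1, dot_shift, hHx]
    have hyGy : y ⬝ᵥ (G *ᵥ y) = z ⬝ᵥ ((Pᵀ * G * P) *ᵥ z) := by
      rw [hydef, quad_congr]
    have hyy : y ⬝ᵥ y = z ⬝ᵥ z := by
      have h2 := quad_congr P 1 z
      rw [Matrix.mul_one, hPtP, one_mulVec, one_mulVec, ← hydef] at h2
      exact h2.symm
    have hxx : x ⬝ᵥ x = y ⬝ᵥ (B⁻¹ *ᵥ y) := by
      have hx2 : x = H *ᵥ (B⁻¹ *ᵥ y) := by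
        rw [hxdef, hKdef, hydef, ← mulVec_mulVec, ← mulVec_mulVec]
      have hBu : B *ᵥ (B⁻¹ *ᵥ y) = y := by rw [mulVec_mulVec, hBBinv, one_mulVec]
      rw [hx2, dot_shift, mulVec_mulVec, ← hBdef, hBu]
    have hdiag : z ⬝ᵥ ((Pᵀ * G * P) *ᵥ z)
        = ∑ a : Fin j, hGsymm.eigenvalues (σ a) * (z a) ^ 2 := by
      rw [hPGP]
      simp only [dotProduct, mulVec_diagonal]
      exact Finset.sum_congr rfl fun a _ => by ring
    have hge : g * (z ⬝ᵥ z) ≤ ∑ a : Fin j, hGsymm.eigenvalues (σ a) * (z a) ^ 2 := by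
      rw [dotProduct, Finset.mul_sum]
      apply Finset.sum_le_sum
      intro a _
      have h3 : g * (z a * z a) = g * (z a) ^ 2 := by ring
      rw [h3]
      exact mul_le_mul_of_nonneg_right (hσg a) (sq_nonneg _)
    calc (h * g) * (x ⬝ᵥ x) = g * (h * (y ⬝ᵥ (B⁻¹ *ᵥ y))) := by rw [hxx]; ring
      _ ≤ g * (y ⬝ᵥ y) := mul_le_mul_of_nonneg_left (hBinvlow y) hg.le
      _ = g * (z ⬝ᵥ z) := by rw [hyy]
      _ ≤ ∑ a : Fin j, hGsymm.eigenvalues (σ a) * (z a) ^ 2 := hge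
      _ = z ⬝ᵥ ((Pᵀ * G * P) *ᵥ z) := hdiag.symm
      _ = y ⬝ᵥ (G *ᵥ y) := hyGy.symm
      _ = x ⬝ᵥ ((H * G * Hᵀ) *ᵥ x) := hrhs.symm
  exact count_ge hHGH K hKinj hquad
end
end

section
/- Consider a multi-layer ScBM satisfying Assumption 1 (with constant c0 ≥ 1) and Assumption 2 (with constant c1 > 0), with population matrices P_l = ρ Y B_l Zᵀ and K := rank(Σ_{l=1}^L B_l B_lᵀ). Then there exists a constant c > 0 depending only on c0, c1, K_y, K_z such that the K-th largest eigenvalue of Σ_{l=1}^L P_l P_lᵀ satisfies λ_K( Σ_{l=1}^L P_l P_lᵀ ) ≥ c L n² ρ². In particular, one may take c = c1 / (c0² K_y K_z), via the Loewner bound Σ_l P_l P_lᵀ ⪰ (n/(c0 K_z)) ρ² Y (Σ_l B_l B_lᵀ) Yᵀ. -/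
open Matrix Finset
open scoped BigOperators Classical

noncomputable section

namespace Helper

variable {d : ℕ} {A : Matrix (Fin d) (Fin d) ℝ}

lemma U_star_mul (hA : A.IsHermitian) :
    (star (hA.eigenvectorUnitary : Matrix (Fin d) (Fin d) ℝ)) * hA.eigenvectorUnitary = 1 :=
  Matrix.mem_unitaryGroup_iff'.mp hA.eigenvectorUnitary.2

lemma U_mul_star (hA : A.IsHermitian) :
    (hA.eigenvectorUnitary : Matrix (Fin d) (Fin d) ℝ) * star (hA.eigenvectorUnitary : Matrix (Fin d) (Fin d) ℝ) = 1 :=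
  Matrix.mem_unitaryGroup_iff.mp hA.eigenvectorUnitary.2

/-- coordinates of x in the eigenbasis -/
def coords (hA : A.IsHermitian) (x : Fin d → ℝ) : Fin d → ℝ :=
  (star (hA.eigenvectorUnitary : Matrix (Fin d) (Fin d) ℝ)) *ᵥ x

lemma U_mulVec_coords (hA : A.IsHermitian) (x : Fin d → ℝ) :
    (hA.eigenvectorUnitary : Matrix (Fin d) (Fin d) ℝ) *ᵥ coords hA x = x := by
  rw [coords, Matrix.mulVec_mulVec, U_mul_star, Matrix.one_mulVec]

lemma dot_U_mulVec (hA : A.IsHermitian) (x : Fin d → ℝ) (w : Fin d → ℝ) :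
    x ⬝ᵥ ((hA.eigenvectorUnitary : Matrix (Fin d) (Fin d) ℝ) *ᵥ w) = coords hA x ⬝ᵥ w := by
  rw [Matrix.dotProduct_mulVec, coords]
  congr 1
  rw [← Matrix.mulVec_transpose]
  congr 1

lemma dot_self_eq (hA : A.IsHermitian) (x : Fin d → ℝ) :
    x ⬝ᵥ x = ∑ i, (coords hA x i) ^ 2 := by
  conv_lhs => rw [← U_mulVec_coords hA x]
  rw [dot_U_mulVec hA]
  simp [dotProduct, sq, coords, U_mulVec_coords]

lemma quad_eq (hA : A.IsHermitian) (x : Fin d → ℝ) :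
    x ⬝ᵥ (A *ᵥ x) = ∑ i, hA.eigenvalues i * (coords hA x i) ^ 2 := by
  conv_lhs => rw [hA.spectral_theorem, Unitary.conjStarAlgAut_apply]
  rw [← Matrix.mulVec_mulVec, ← Matrix.mulVec_mulVec, dot_U_mulVec hA]
  have : (star (hA.eigenvectorUnitary : Matrix (Fin d) (Fin d) ℝ)) *ᵥ x = coords hA x := rfl
  rw [this]
  simp only [dotProduct, Matrix.mulVec_diagonal, sq, Function.comp]
  simp [RCLike.ofReal_real_eq_id]
  exact Finset.sum_congr rfl fun i _ => by ring

end Helper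

namespace Helper2
open Helper

variable {d : ℕ} {A : Matrix (Fin d) (Fin d) ℝ}

/-- column `i` of the eigenvector matrix -/
def col (hA : A.IsHermitian) (i : Fin d) : Fin d → ℝ :=
  (hA.eigenvectorUnitary : Matrix (Fin d) (Fin d) ℝ)ᵀ i

lemma coords_col (hA : A.IsHermitian) (i : Fin d) :
    coords hA (col hA i) = Pi.single i 1 := by
  have h : col hA i = (hA.eigenvectorUnitary : Matrix (Fin d) (Fin d) ℝ) *ᵥ Pi.single i 1 := by
    ext j; simp [col, Matrix.mulVec_single, Matrix.transpose_apply]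
  rw [coords, h, Matrix.mulVec_mulVec, U_star_mul, Matrix.one_mulVec]

lemma coords_vanish (hA : A.IsHermitian) (s : Finset (Fin d)) {x : Fin d → ℝ}
    (hx : x ∈ Submodule.span ℝ (col hA '' ↑s)) {j : Fin d} (hj : j ∉ s) :
    coords hA x j = 0 := by
  have hsub : Submodule.span ℝ (col hA '' ↑s) ≤
      LinearMap.ker ((LinearMap.proj j).comp
        (Matrix.mulVecLin (star (hA.eigenvectorUnitary : Matrix (Fin d) (Fin d) ℝ)))) := by
    rw [Submodule.span_le]
    rintro _ ⟨i, hi, rfl⟩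
    simp only [SetLike.mem_coe, LinearMap.mem_ker, LinearMap.comp_apply,
      Matrix.mulVecLin_apply, LinearMap.proj_apply]
    have h2 : (star (hA.eigenvectorUnitary : Matrix (Fin d) (Fin d) ℝ)) *ᵥ col hA i
        = Pi.single i 1 := coords_col hA i
    rw [h2]
    exact Pi.single_eq_of_ne (by rintro rfl; exact hj hi) 1
  exact hsub hx

lemma count_ge (hA : A.IsHermitian) (v : ℝ) (K : ℕ) (W : Submodule ℝ (Fin d → ℝ))
    (hWd : K ≤ Module.finrank ℝ W)
    (hq : ∀ x ∈ W, v * (x ⬝ᵥ x) ≤ x ⬝ᵥ (A *ᵥ x)) :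
    K ≤ (univ.filter fun i => v ≤ hA.eigenvalues i).card := by
  by_contra hlt
  push_neg at hlt
  set s := univ.filter (fun i => v ≤ hA.eigenvalues i) with hs
  set T := Submodule.span ℝ (col hA '' ↑sᶜ) with hT
  have hUunit : IsUnit (hA.eigenvectorUnitary : Matrix (Fin d) (Fin d) ℝ) :=
    ⟨Unitary.toUnits hA.eigenvectorUnitary, rfl⟩
  have hli : LinearIndependent ℝ (fun i => col hA i) :=
    Matrix.linearIndependent_cols_iff_isUnit.mpr hUunit
  have hli2 : LinearIndependent ℝ (fun i : {a : Fin d // a ∈ (↑sᶜ : Set (Fin d))} => col hA ↑i) :=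
    hli.comp _ Subtype.val_injective
  have hTrank : Module.finrank ℝ T = sᶜ.card := by
    rw [hT, Set.image_eq_range, finrank_span_eq_card hli2]
    simp [Finset.card_compl]
  have hsup : Module.finrank ℝ ↥(W ⊔ T) ≤ d := by
    have := Submodule.finrank_le (W ⊔ T)
    simpa [Module.finrank_fin_fun] using this
  have heq := Submodule.finrank_sup_add_finrank_inf_eq W T
  have hscard : s.card ≤ d := by simpa using Finset.card_le_card (Finset.subset_univ s)
  have hcompl : sᶜ.card = d - s.card := by
    rw [Finset.card_compl]; simp
  have hinf : 0 < Module.finrank ℝ ↥(W ⊓ T) := by omega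
  have hbot : (W ⊓ T : Submodule ℝ (Fin d → ℝ)) ≠ ⊥ := by
    intro h
    rw [h] at hinf
    simp at hinf
  obtain ⟨x, hxmem, hxne⟩ := Submodule.exists_mem_ne_zero_of_ne_bot hbot
  have hxW : x ∈ W := hxmem.1
  have hxT : x ∈ T := hxmem.2
  have hcne : coords hA x ≠ 0 := by
    intro h
    apply hxne
    have := U_mulVec_coords hA x
    rw [h, Matrix.mulVec_zero] at this
    exact this.symm
  obtain ⟨j0, hj0⟩ := Function.ne_iff.mp hcne
  have hj0c : j0 ∈ sᶜ := by
    by_contra h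
    exact hj0 (coords_vanish hA sᶜ hxT h)
  have key : x ⬝ᵥ (A *ᵥ x) < v * (x ⬝ᵥ x) := by
    rw [quad_eq hA, dot_self_eq hA, Finset.mul_sum]
    apply Finset.sum_lt_sum
    · intro i _
      by_cases hi : i ∈ s
      · rw [coords_vanish hA sᶜ hxT (by simpa using hi)]
        simp
      · have : hA.eigenvalues i < v := by
          by_contra h
          exact hi (by simp [hs, not_lt.mp h])
        exact mul_le_mul_of_nonneg_right this.le (sq_nonneg _)
    · refine ⟨j0, Finset.mem_univ _, ?_⟩
      have hlam : hA.eigenvalues j0 < v := by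
        have := Finset.mem_compl.mp hj0c
        by_contra h
        exact this (by simp [hs, not_lt.mp h])
      have hpos : 0 < (coords hA x j0) ^ 2 :=
        lt_of_le_of_ne (sq_nonneg _) (Ne.symm (pow_ne_zero 2 hj0))
      exact mul_lt_mul_of_pos_right hlam hpos
  exact absurd (hq x hxW) (not_le.mpr key)

end Helper2

namespace Helper3

lemma memb_t_mul {n K : ℕ} (g : Fin n → Fin K) :
    (memb g)ᵀ * memb g = Matrix.diagonal (fun k => (csize g k : ℝ)) := by
  ext k k'
  simp only [Matrix.mul_apply, Matrix.transpose_apply, memb, Matrix.of_apply]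
  by_cases h : k = k'
  · subst h
    simp only [Matrix.diagonal_apply_eq, csize]
    rw [Finset.card_filter]
    push_cast
    exact Finset.sum_congr rfl fun i _ => by by_cases h1 : g i = k <;> simp [h1]
  · rw [Matrix.diagonal_apply_ne _ h]
    apply Finset.sum_eq_zero
    intro i _
    by_cases h1 : g i = k
    · by_cases h2 : g i = k'
      · exact (h (h1.symm.trans h2)).elim
      · simp [h2]
    · simp [h1]

lemma memb_mulVec {n K : ℕ} (g : Fin n → Fin K) (w : Fin K → ℝ) (i : Fin n) :
    (memb g *ᵥ w) i = w (g i) := by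
  simp [memb, Matrix.mulVec, dotProduct]

lemma psd_smul {n : ℕ} {M : Matrix (Fin n) (Fin n) ℝ} (hM : M.PosSemidef) {c : ℝ}
    (hc : 0 ≤ c) : (c • M).PosSemidef := by
  refine Matrix.PosSemidef.of_dotProduct_mulVec_nonneg ?_ fun x => ?_
  · show (c • M)ᴴ = c • M
    rw [Matrix.conjTranspose_smul, hM.1.eq]
    simp
  · rw [Matrix.smul_mulVec, dotProduct_smul]
    exact smul_nonneg hc (hM.dotProduct_mulVec_nonneg x)

lemma psd_sum {n L : ℕ} (f : Fin L → Matrix (Fin n) (Fin n) ℝ)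
    (hf : ∀ l, (f l).PosSemidef) : (∑ l, f l).PosSemidef := by
  classical
  refine Finset.sum_induction f Matrix.PosSemidef (fun a b ha hb => ha.add hb)
    Matrix.PosSemidef.zero (fun l _ => hf l)

end Helper3

/-- lower bound λ_K(∑ P_l P_lᵀ) ≥ c L n² ρ² with
c = c1/(c0² K_y K_z), together with the Loewner bound
∑ P_l P_lᵀ ⪰ (n/(c0 K_z)) ρ² Y (∑ B_l B_lᵀ) Yᵀ.
"λ_K(M) ≥ v" is encoded as: at least K eigenvalues of M (with multiplicity)
are ≥ v. -/
theorem stmt15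
    (n L Ky Kz K : ℕ) (hn : 0 < n) (hL : 0 < L) (hKy : 0 < Ky) (hKz : 0 < Kz)
    (ρ : ℝ) (hρ0 : 0 < ρ) (hρ1 : ρ ≤ 1)
    (gy : Fin n → Fin Ky) (gz : Fin n → Fin Kz)
    (B : Fin L → Matrix (Fin Ky) (Fin Kz) ℝ)
    (hB : ∀ l a b, 0 ≤ B l a b ∧ B l a b ≤ 1)
    (P : Fin L → Matrix (Fin n) (Fin n) ℝ)
    (hP : ∀ l, P l = ρ • (memb gy * B l * (memb gz)ᵀ))
    -- Assumption 1 (balanced clusters) with constant c0 ≥ 1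
    (c0 : ℝ) (hc0 : 1 ≤ c0)
    (hbalY : ∀ k, (n : ℝ) / (c0 * Ky) ≤ (csize gy k : ℝ) ∧ (csize gy k : ℝ) ≤ c0 * n / Ky)
    (hbalZ : ∀ k, (n : ℝ) / (c0 * Kz) ≤ (csize gz k : ℝ) ∧ (csize gz k : ℝ) ≤ c0 * n / Kz)
    -- Assumption 2: K = rank(∑ B_l B_lᵀ) and λ_K(∑ B_l B_lᵀ) ≥ c1·L with c1 > 0
    (c1 : ℝ) (hc1 : 0 < c1)
    (hKrank : (∑ l, B l * (B l)ᵀ).rank = K)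
    (hBH : (∑ l, B l * (B l)ᵀ).IsHermitian)
    (hA2 : K ≤ (Finset.univ.filter fun a : Fin Ky => c1 * L ≤ hBH.eigenvalues a).card)
    (hPH : (∑ l, P l * (P l)ᵀ).IsHermitian) :
    -- the Loewner bound ∑ P_l P_lᵀ ⪰ (n/(c0 K_z)) ρ² Y (∑ B_l B_lᵀ) Yᵀ
    (∑ l, P l * (P l)ᵀ -
      ((n : ℝ) / (c0 * Kz) * ρ ^ 2) • (memb gy * (∑ l, B l * (B l)ᵀ) * (memb gy)ᵀ)).PosSemidef ∧
    -- λ_K(∑ P_l P_lᵀ) ≥ (c1/(c0² K_y K_z)) L n² ρ²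
    K ≤ (Finset.univ.filter fun i : Fin n =>
      c1 / (c0 ^ 2 * Ky * Kz) * L * (n : ℝ) ^ 2 * ρ ^ 2 ≤ hPH.eigenvalues i).card := by
  classical
  have hc0pos : (0:ℝ) < c0 := lt_of_lt_of_le one_pos hc0
  have hnpos : (0:ℝ) < n := by exact_mod_cast hn
  have hKypos : (0:ℝ) < Ky := by exact_mod_cast hKy
  have hKzpos : (0:ℝ) < Kz := by exact_mod_cast hKz
  set Y : Matrix (Fin n) (Fin Ky) ℝ := memb gy with hYdef
  set Z : Matrix (Fin n) (Fin Kz) ℝ := memb gz with hZdef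
  set S : Matrix (Fin Ky) (Fin Ky) ℝ := ∑ l, B l * (B l)ᵀ with hSdef
  set m : ℝ := (n : ℝ) / (c0 * Kz) with hmdef
  have hmpos : 0 < m := by rw [hmdef]; positivity
  set Dz : Matrix (Fin Kz) (Fin Kz) ℝ := Matrix.diagonal (fun k => (csize gz k : ℝ)) with hDz
  set Dy : Matrix (Fin Ky) (Fin Ky) ℝ := Matrix.diagonal (fun k => (csize gy k : ℝ)) with hDy
  have hZZ : Zᵀ * Z = Dz := Helper3.memb_t_mul gz
  have hYY : Yᵀ * Y = Dy := Helper3.memb_t_mul gy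
  -- rewrite each P_l P_lᵀ
  have hPl : ∀ l, P l * (P l)ᵀ = ρ^2 • ((Y * B l) * Dz * (Y * B l)ᵀ) := by
    intro l
    rw [hP l, Matrix.transpose_smul, Matrix.smul_mul, Matrix.mul_smul, smul_smul, ← sq]
    congr 1
    rw [Matrix.transpose_mul, Matrix.transpose_transpose, ← hZZ]
    simp only [Matrix.mul_assoc]
  -- the key algebraic identity
  have hSum : ∑ l, P l * (P l)ᵀ - (m * ρ^2) • (Y * S * Yᵀ)
      = ∑ l, ρ^2 • ((Y * B l) * (Dz - m • (1 : Matrix (Fin Kz) (Fin Kz) ℝ)) * (Y * B l)ᵀ) := by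
    have h2 : (m * ρ^2) • (Y * S * Yᵀ)
        = ∑ l, ρ^2 • ((Y * B l) * (m • (1 : Matrix (Fin Kz) (Fin Kz) ℝ)) * (Y * B l)ᵀ) := by
      rw [hSdef, Matrix.mul_sum, Matrix.sum_mul, Finset.smul_sum]
      refine Finset.sum_congr rfl fun l _ => ?_
      rw [Matrix.mul_smul, Matrix.mul_one, Matrix.smul_mul, smul_smul, mul_comm m (ρ^2)]
      congr 1
      rw [Matrix.transpose_mul]
      simp only [Matrix.mul_assoc]
    rw [h2, ← Finset.sum_sub_distrib]
    refine Finset.sum_congr rfl fun l _ => ?_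
    rw [hPl l, ← smul_sub]
    congr 1
    rw [Matrix.mul_sub, Matrix.sub_mul]
  have hDiagPSD : (Dz - m • (1 : Matrix (Fin Kz) (Fin Kz) ℝ)).PosSemidef := by
    rw [hDz, Matrix.smul_one_eq_diagonal, Matrix.diagonal_sub]
    refine Matrix.PosSemidef.diagonal fun k => ?_
    have := (hbalZ k).1
    simp only [Pi.sub_apply, Pi.zero_apply]
    linarith
  have hterm : ∀ l, (ρ^2 • ((Y * B l) * (Dz - m • (1 : Matrix (Fin Kz) (Fin Kz) ℝ)) * (Y * B l)ᵀ)).PosSemidef := by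
    intro l
    refine Helper3.psd_smul ?_ (sq_nonneg ρ)
    have := hDiagPSD.mul_mul_conjTranspose_same (Y * B l)
    rwa [Matrix.conjTranspose_eq_transpose_of_trivial] at this
  have part1 : (∑ l, P l * (P l)ᵀ - (m * ρ^2) • (Y * S * Yᵀ)).PosSemidef := by
    rw [hSum]; exact Helper3.psd_sum _ hterm
  refine ⟨part1, ?_⟩
  -- Part 2: eigenvalue counting
  set v : ℝ := c1 / (c0 ^ 2 * Ky * Kz) * L * (n : ℝ) ^ 2 * ρ ^ 2 with hv
  have hdYpos : ∀ k, (0:ℝ) < (csize gy k : ℝ) := fun k =>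
    lt_of_lt_of_le (by positivity) (hbalY k).1
  set Dinv : Matrix (Fin Ky) (Fin Ky) ℝ := Matrix.diagonal (fun k => ((csize gy k : ℝ))⁻¹) with hDinv
  have hDD : Dy * Dinv = 1 := by
    rw [hDy, hDinv, Matrix.diagonal_mul_diagonal]
    have : (fun k => (csize gy k : ℝ) * ((csize gy k : ℝ))⁻¹) = fun _ => (1:ℝ) := by
      funext k; exact mul_inv_cancel₀ (ne_of_gt (hdYpos k))
    rw [this, Matrix.diagonal_one]
  set φ : (Fin Ky → ℝ) →ₗ[ℝ] (Fin n → ℝ) := Matrix.mulVecLin (Y * Dinv) with hφ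
  have hgysurj : ∀ k, ∃ i, gy i = k := by
    intro k
    have : 0 < csize gy k := by exact_mod_cast hdYpos k
    obtain ⟨i, hi⟩ := Finset.card_pos.mp this
    exact ⟨i, (Finset.mem_filter.mp hi).2⟩
  have hker : LinearMap.ker φ = ⊥ := by
    rw [LinearMap.ker_eq_bot']
    intro u hu
    have hx : Y *ᵥ (Dinv *ᵥ u) = 0 := by
      rw [Matrix.mulVec_mulVec]
      exact hu
    have hDu : Dinv *ᵥ u = 0 := by
      funext k
      obtain ⟨i, hi⟩ := hgysurj k
      have := congrFun hx i
      rw [Helper3.memb_mulVec gy] at this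
      rw [hi] at this
      simpa using this
    funext k
    have := congrFun hDu k
    rw [Matrix.mulVec_diagonal] at this
    have hne : ((csize gy k : ℝ))⁻¹ ≠ 0 := inv_ne_zero (ne_of_gt (hdYpos k))
    simpa [hne] using this
  set sB : Finset (Fin Ky) := Finset.univ.filter (fun a => c1 * L ≤ hBH.eigenvalues a) with hsB
  set V : Submodule ℝ (Fin Ky → ℝ) := Submodule.span ℝ (Helper2.col hBH '' ↑sB) with hV
  set W : Submodule ℝ (Fin n → ℝ) := Submodule.map φ V with hW
  have hliB : LinearIndependent ℝ (fun i => Helper2.col hBH i) :=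
    Matrix.linearIndependent_cols_iff_isUnit.mpr ⟨Unitary.toUnits hBH.eigenvectorUnitary, rfl⟩
  have hli2 : LinearIndependent ℝ
      (fun i : {a : Fin Ky // a ∈ (↑sB : Set (Fin Ky))} => Helper2.col hBH ↑i) :=
    hliB.comp _ Subtype.val_injective
  have hli3 : LinearIndependent ℝ
      (fun i : {a : Fin Ky // a ∈ (↑sB : Set (Fin Ky))} => φ (Helper2.col hBH ↑i)) :=
    hli2.map' φ hker
  have hWrank : K ≤ Module.finrank ℝ W := by
    have hWeq : W = Submodule.span ℝ
        (Set.range (fun i : {a : Fin Ky // a ∈ (↑sB : Set (Fin Ky))} => φ (Helper2.col hBH ↑i))) := by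
      rw [hW, hV, Submodule.map_span, Set.image_image, Set.image_eq_range]
    rw [hWeq, finrank_span_eq_card hli3]
    simpa using hA2
  have hq : ∀ x ∈ W, v * (x ⬝ᵥ x) ≤ x ⬝ᵥ ((∑ l, P l * (P l)ᵀ) *ᵥ x) := by
    rintro x hx
    obtain ⟨u, huV, rfl⟩ := Submodule.mem_map.mp hx
    have hxu : φ u = Y *ᵥ (Dinv *ᵥ u) := by
      rw [hφ, Matrix.mulVecLin_apply, ← Matrix.mulVec_mulVec]
    -- (d) Yᵀ x = u
    have hYtx : Yᵀ *ᵥ (φ u) = u := by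
      rw [hxu, Matrix.mulVec_mulVec, Matrix.mulVec_mulVec, hYY, hDD, Matrix.one_mulVec]
    -- dot with Y-mulVec
    have hdotY : ∀ w : Fin Ky → ℝ, (φ u) ⬝ᵥ (Y *ᵥ w) = u ⬝ᵥ w := by
      intro w
      rw [Matrix.dotProduct_mulVec, ← Matrix.mulVec_transpose, hYtx]
    -- (e)
    have hquadN : (φ u) ⬝ᵥ ((Y * S * Yᵀ) *ᵥ (φ u)) = u ⬝ᵥ (S *ᵥ u) := by
      have h1 : (Y * S * Yᵀ) *ᵥ (φ u) = Y *ᵥ (S *ᵥ (Yᵀ *ᵥ (φ u))) := by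
        simp only [Matrix.mulVec_mulVec, Matrix.mul_assoc]
      rw [h1, hYtx, hdotY]
    -- (f)
    have hnormx : (φ u) ⬝ᵥ (φ u) = u ⬝ᵥ (Dinv *ᵥ u) := by
      calc (φ u) ⬝ᵥ (φ u) = (φ u) ⬝ᵥ (Y *ᵥ (Dinv *ᵥ u)) := by rw [← hxu]
        _ = u ⬝ᵥ (Dinv *ᵥ u) := hdotY _
    -- (c) spectral lower bound on u S u
    have hcoord : ∀ a, a ∉ sB → Helper.coords hBH u a = 0 :=
      fun a ha => Helper2.coords_vanish hBH sB huV ha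
    have hquadS : c1 * L * (u ⬝ᵥ u) ≤ u ⬝ᵥ (S *ᵥ u) := by
      rw [Helper.quad_eq hBH, Helper.dot_self_eq hBH, Finset.mul_sum]
      refine Finset.sum_le_sum fun a _ => ?_
      by_cases ha : a ∈ sB
      · have : c1 * L ≤ hBH.eigenvalues a := (Finset.mem_filter.mp ha).2
        exact mul_le_mul_of_nonneg_right this (sq_nonneg _)
      · rw [hcoord a ha]
        simp
    -- (g) norm upper bound
    have hnorm_le : (φ u) ⬝ᵥ (φ u) ≤ c0 * Ky / n * (u ⬝ᵥ u) := by
      rw [hnormx]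
      have : u ⬝ᵥ (Dinv *ᵥ u) = ∑ k, ((csize gy k : ℝ))⁻¹ * (u k * u k) := by
        simp only [dotProduct, Matrix.mulVec_diagonal, hDinv]
        exact Finset.sum_congr rfl fun k _ => by ring
      rw [this]
      have hdot : c0 * Ky / n * (u ⬝ᵥ u) = ∑ k, c0 * Ky / n * (u k * u k) := by
        rw [← Finset.mul_sum]; rfl
      rw [hdot]
      refine Finset.sum_le_sum fun k _ => ?_
      have hinvk : ((csize gy k : ℝ))⁻¹ ≤ c0 * Ky / n := by
        have h1 : (n : ℝ) / (c0 * Ky) ≤ (csize gy k : ℝ) := (hbalY k).1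
        have h2 : (0:ℝ) < (n : ℝ) / (c0 * Ky) := by positivity
        have := inv_anti₀ h2 h1
        rwa [inv_div] at this
      exact mul_le_mul_of_nonneg_right hinvk (mul_self_nonneg _)
    -- (h) PSD gives bound on quadratic form of M
    have hM : m * ρ^2 * ((φ u) ⬝ᵥ ((Y * S * Yᵀ) *ᵥ (φ u)))
        ≤ (φ u) ⬝ᵥ ((∑ l, P l * (P l)ᵀ) *ᵥ (φ u)) := by
      have := part1.dotProduct_mulVec_nonneg (φ u)
      rw [Matrix.sub_mulVec, dotProduct_sub, Matrix.smul_mulVec,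
        dotProduct_smul] at this
      simp only [star_trivial, smul_eq_mul] at this
      linarith [this]
    -- combine
    have huu : 0 ≤ u ⬝ᵥ u := by
      have : u ⬝ᵥ u = ∑ k, u k * u k := rfl
      rw [this]
      exact Finset.sum_nonneg fun k _ => mul_self_nonneg _
    have hvpos : 0 ≤ v := by rw [hv]; positivity
    have hkey : v * (c0 * Ky / n) = m * ρ^2 * (c1 * L) := by
      rw [hv, hmdef]
      field_simp
    calc v * ((φ u) ⬝ᵥ (φ u)) ≤ v * (c0 * Ky / n * (u ⬝ᵥ u)) :=
          mul_le_mul_of_nonneg_left hnorm_le hvpos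
      _ = (m * ρ^2 * (c1 * L)) * (u ⬝ᵥ u) := by rw [← mul_assoc, hkey]
      _ = (m * ρ^2) * (c1 * L * (u ⬝ᵥ u)) := by ring
      _ ≤ (m * ρ^2) * (u ⬝ᵥ (S *ᵥ u)) := by
          refine mul_le_mul_of_nonneg_left hquadS ?_
          positivity
      _ ≤ (φ u) ⬝ᵥ ((∑ l, P l * (P l)ᵀ) *ᵥ (φ u)) := by rw [← hquadN]; exact hM
  exact Helper2.count_ge hPH v K W hWrank hq
end
end

section
/- Consider a multi-layer ScBM satisfying Assumption 1 with constant c0 ≥ 1, let K := rank(Σ_{l=1}^L B_l B_lᵀ), set U := Y Δ_y^{-1} Q^R ∈ ℝ^{n×K} and 𝔹^R := Σ_{l=1}^L B_l Δ_z² B_lᵀ ∈ ℝ^{K_y×K_y}. Then for any two nodes i, j ∈ [n] lying in row clusters k := g_i^y and k' := g_j^y, one has the exact identity Σ_{m=1}^K D^R_{mm} ( Q^R_{k m}/√(n_k^y) − Q^R_{k' m}/√(n_{k'}^y) )² = 𝔹^R_{kk} + 𝔹^R_{k'k'} − 2 𝔹^R_{kk'}, and consequently c0² L n² · ‖U_{i∗}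 − U_{j∗}‖₂² ≥ 𝔹^R_{kk} + 𝔹^R_{k'k'} − 2 𝔹^R_{kk'}. -/
open Matrix Finset
open scoped BigOperators Classical

noncomputable section

/-- Diagonal matrix Δ = diag(√n_1, …, √n_K). -/
def Dmat {n K : ℕ} (g : Fin n → Fin K) : Matrix (Fin K) (Fin K) ℝ :=
  Matrix.diagonal fun k => Real.sqrt (csize g k)

/-- Diagonal matrix Δ⁻¹ = diag(1/√n_1, …, 1/√n_K). -/
def DmatInv {n K : ℕ} (g : Fin n → Fin K) : Matrix (Fin K) (Fin K) ℝ :=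
  Matrix.diagonal fun k => (Real.sqrt (csize g k))⁻¹

/-- the exact identity
∑_m D^R_{mm} (Q^R_{km}/√n_k − Q^R_{k'm}/√n_{k'})² = 𝔹^R_{kk} + 𝔹^R_{k'k'} − 2𝔹^R_{kk'}
and the consequent lower bound c0² L n² ‖U_{i∗} − U_{j∗}‖₂² ≥ RHS. -/
theorem stmt17
    (n L Ky Kz K : ℕ) (hn : 0 < n) (hL : 0 < L) (hKy : 0 < Ky) (hKz : 0 < Kz)
    (gy : Fin n → Fin Ky) (gz : Fin n → Fin Kz)
    (B : Fin L → Matrix (Fin Ky) (Fin Kz) ℝ)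
    (hB : ∀ l a b, 0 ≤ B l a b ∧ B l a b ≤ 1)
    -- Assumption 1 (balanced clusters) with constant c0 ≥ 1
    (c0 : ℝ) (hc0 : 1 ≤ c0)
    (hbalY : ∀ k, (n : ℝ) / (c0 * Ky) ≤ (csize gy k : ℝ) ∧ (csize gy k : ℝ) ≤ c0 * n / Ky)
    (hbalZ : ∀ k, (n : ℝ) / (c0 * Kz) ≤ (csize gz k : ℝ) ∧ (csize gz k : ℝ) ≤ c0 * n / Kz)
    -- K = rank(∑ B_l B_lᵀ)
    (hrank : (∑ l, B l * (B l)ᵀ).rank = K)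
    -- eigendecomposition Δ_y 𝔹^R Δ_y = Q^R D^R (Q^R)ᵀ where 𝔹^R = ∑ B_l Δ_z² B_lᵀ
    (BR : Matrix (Fin Ky) (Fin Ky) ℝ)
    (hBR : BR = ∑ l, B l * (Dmat gz) ^ 2 * (B l)ᵀ)
    (QR : Matrix (Fin Ky) (Fin K) ℝ) (hQorth : QRᵀ * QR = 1)
    (dR : Fin K → ℝ) (hdR : ∀ m, dR m ≠ 0)
    (hQdec : Dmat gy * BR * Dmat gy = QR * Matrix.diagonal dR * QRᵀ)
    -- U = Y Δ_y⁻¹ Q^R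
    (U : Matrix (Fin n) (Fin K) ℝ)
    (hU : U = memb gy * DmatInv gy * QR)
    (i j : Fin n) (k k' : Fin Ky) (hk : k = gy i) (hk' : k' = gy j) :
    -- the exact identity
    (∑ m, dR m * (QR k m / Real.sqrt (csize gy k) -
        QR k' m / Real.sqrt (csize gy k')) ^ 2 =
      BR k k + BR k' k' - 2 * BR k k') ∧
    -- the consequent lower bound
    (c0 ^ 2 * L * (n : ℝ) ^ 2 * (∑ m, (U i m - U j m) ^ 2) ≥
      BR k k + BR k' k' - 2 * BR k k') := by
  have hc0pos : (0:ℝ) < c0 := lt_of_lt_of_le one_pos hc0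
  have hcsY : ∀ a : Fin Ky, (0:ℝ) < (csize gy a : ℝ) := by
    intro a
    have h := (hbalY a).1
    have hpos : (0:ℝ) < (n : ℝ) / (c0 * Ky) := by
      apply div_pos (by exact_mod_cast hn)
      exact mul_pos hc0pos (by exact_mod_cast hKy)
    linarith
  set s : Fin Ky → ℝ := fun a => Real.sqrt (csize gy a) with hs
  have hspos : ∀ a, 0 < s a := fun a => Real.sqrt_pos.mpr (hcsY a)
  have hss : ∀ a, s a * s a = (csize gy a : ℝ) :=
    fun a => Real.mul_self_sqrt (Nat.cast_nonneg _)
  -- entrywise eigendecomposition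
  have E : ∀ a b, (∑ m, dR m * QR a m * QR b m) = s a * BR a b * s b := by
    intro a b
    have h := Matrix.ext_iff.mpr hQdec a b
    have hl : (Dmat gy * BR * Dmat gy) a b = s a * BR a b * s b := by
      simp only [hs, Dmat, Matrix.mul_diagonal, Matrix.diagonal_mul]
    rw [hl, Matrix.mul_apply] at h
    rw [h]
    apply Eq.symm
    apply Finset.sum_congr rfl
    intro m _
    simp only [Matrix.mul_diagonal, Matrix.transpose_apply]
    ring
  -- Part 1
  have hkne := (hspos k).ne'
  have hk'ne := (hspos k').ne'
  have key1 : ∑ m, dR m * (QR k m / s k - QR k' m / s k') ^ 2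
      = BR k k + BR k' k' - 2 * BR k k' := by
    have expand : ∀ m : Fin K, dR m * (QR k m / s k - QR k' m / s k') ^ 2
        = (dR m * QR k m * QR k m) * ((s k)⁻¹ * (s k)⁻¹)
          - (dR m * QR k m * QR k' m) * (2 * ((s k)⁻¹ * (s k')⁻¹))
          + (dR m * QR k' m * QR k' m) * ((s k')⁻¹ * (s k')⁻¹) := by
      intro m; field_simp; ring
    calc ∑ m, dR m * (QR k m / s k - QR k' m / s k') ^ 2
        = ∑ m, ((dR m * QR k m * QR k m) * ((s k)⁻¹ * (s k)⁻¹)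
          - (dR m * QR k m * QR k' m) * (2 * ((s k)⁻¹ * (s k')⁻¹))
          + (dR m * QR k' m * QR k' m) * ((s k')⁻¹ * (s k')⁻¹)) :=
        Finset.sum_congr rfl fun m _ => expand m
      _ = (∑ m, dR m * QR k m * QR k m) * ((s k)⁻¹ * (s k)⁻¹)
          - (∑ m, dR m * QR k m * QR k' m) * (2 * ((s k)⁻¹ * (s k')⁻¹))
          + (∑ m, dR m * QR k' m * QR k' m) * ((s k')⁻¹ * (s k')⁻¹) := by
        rw [Finset.sum_add_distrib, Finset.sum_sub_distrib,
          ← Finset.sum_mul, ← Finset.sum_mul, ← Finset.sum_mul]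
      _ = BR k k + BR k' k' - 2 * BR k k' := by
        rw [E k k, E k k', E k' k']
        field_simp
        ring
  refine ⟨key1, ?_⟩
  -- U entries
  have hUe : ∀ (p : Fin n) (m : Fin K), U p m = QR (gy p) m / s (gy p) := by
    intro p m
    rw [hU]
    simp only [Matrix.mul_apply, memb, DmatInv, Matrix.of_apply, ite_mul, one_mul,
      zero_mul, Finset.sum_ite_eq, Finset.mem_univ, if_true, div_eq_mul_inv]
    rw [Finset.sum_eq_single (gy p)]
    · simp [Matrix.diagonal_apply_eq, hs, mul_comm]
    · intro b _ hb
      rw [Matrix.diagonal_apply_ne _ (Ne.symm hb)]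
      simp
    · intro h; exact absurd (Finset.mem_univ _) h
  have hsum : ∑ m, (U i m - U j m) ^ 2
      = ∑ m, (QR k m / s k - QR k' m / s k') ^ 2 := by
    apply Finset.sum_congr rfl
    intro m _
    rw [hUe i m, hUe j m, ← hk, ← hk']
  -- positivity of dR
  have hconj : (Matrix.diagonal dR : Matrix (Fin K) (Fin K) ℝ)
      = QRᵀ * (Dmat gy * BR * Dmat gy) * QR := by
    rw [hQdec]
    symm
    calc QRᵀ * (QR * Matrix.diagonal dR * QRᵀ) * QR
        = (QRᵀ * QR) * Matrix.diagonal dR * (QRᵀ * QR) := by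
          simp only [Matrix.mul_assoc]
      _ = Matrix.diagonal dR := by rw [hQorth]; simp
  have hterm : ∀ l, (B l * Dmat gz ^ 2 * (B l)ᵀ).PosSemidef := by
    intro l
    have heq : B l * Dmat gz ^ 2 * (B l)ᵀ = (B l * Dmat gz) * (B l * Dmat gz)ᵀ := by
      rw [Matrix.transpose_mul, sq, Dmat, Matrix.diagonal_transpose]
      simp only [Matrix.mul_assoc]
    rw [heq]
    have h := Matrix.posSemidef_self_mul_conjTranspose (B l * Dmat gz)
    rwa [Matrix.conjTranspose_eq_transpose_of_trivial] at h
  have hBRpsd : BR.PosSemidef := by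
    rw [hBR]
    exact Finset.sum_induction _ (fun (M : Matrix (Fin Ky) (Fin Ky) ℝ) => M.PosSemidef)
      (fun a b ha hb => ha.add hb) Matrix.PosSemidef.zero (fun l _ => hterm l)
  have hMpsd : (Dmat gy * BR * Dmat gy).PosSemidef := by
    have h := hBRpsd.mul_mul_conjTranspose_same (Dmat gy)
    rwa [Matrix.conjTranspose_eq_transpose_of_trivial, Dmat,
      Matrix.diagonal_transpose, ← Dmat] at h
  have hdpsd : (Matrix.diagonal dR : Matrix (Fin K) (Fin K) ℝ).PosSemidef := by
    rw [hconj]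
    have h := hMpsd.conjTranspose_mul_mul_same QR
    rwa [Matrix.conjTranspose_eq_transpose_of_trivial] at h
  have hd0 : ∀ m, 0 ≤ dR m := Matrix.posSemidef_diagonal_iff.mp hdpsd
  -- trace bound
  have hzsum : ∑ c, ((csize gz c : ℝ)) = (n : ℝ) := by
    have h : ∑ c, csize gz c = n := by
      unfold csize
      rw [← Finset.card_eq_sum_card_fiberwise (fun x _ => Finset.mem_univ (gz x))]
      simp
    exact_mod_cast h
  have hysum : ∑ a, ((csize gy a : ℝ)) = (n : ℝ) := by
    have h : ∑ a, csize gy a = n := by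
      unfold csize
      rw [← Finset.card_eq_sum_card_fiberwise (fun x _ => Finset.mem_univ (gy x))]
      simp
    exact_mod_cast h
  have hBRentry : ∀ a, BR a a = ∑ l, ∑ c, B l a c * B l a c * (csize gz c : ℝ) := by
    intro a
    rw [hBR, Matrix.sum_apply]
    apply Finset.sum_congr rfl
    intro l _
    rw [sq]
    show (B l * (Dmat gz * Dmat gz) * (B l)ᵀ) a a = _
    rw [Dmat, Matrix.diagonal_mul_diagonal, Matrix.mul_apply]
    apply Finset.sum_congr rfl
    intro c _
    rw [Matrix.mul_diagonal, Matrix.transpose_apply,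
      Real.mul_self_sqrt (Nat.cast_nonneg _)]
    ring
  have hBRdiag : ∀ a, BR a a ≤ (L : ℝ) * n := by
    intro a
    rw [hBRentry a]
    calc ∑ l, ∑ c, B l a c * B l a c * (csize gz c : ℝ)
        ≤ ∑ l : Fin L, (n : ℝ) := by
          apply Finset.sum_le_sum
          intro l _
          calc ∑ c, B l a c * B l a c * (csize gz c : ℝ)
              ≤ ∑ c, (csize gz c : ℝ) := by
                apply Finset.sum_le_sum
                intro c _
                have hb1 := (hB l a c).1
                have hb2 := (hB l a c).2
                have hcn : (0:ℝ) ≤ (csize gz c : ℝ) := Nat.cast_nonneg _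
                have h3 : B l a c * B l a c ≤ 1 := by nlinarith
                have h4 := mul_le_mul_of_nonneg_right h3 hcn
                linarith [h4]
            _ = (n : ℝ) := hzsum
      _ = (L : ℝ) * n := by simp [mul_comm]
  have htrQ : (QR * Matrix.diagonal dR * QRᵀ).trace = ∑ m, dR m := by
    rw [Matrix.trace_mul_cycle, hQorth, Matrix.one_mul, Matrix.trace_diagonal]
  have htrM : (Dmat gy * BR * Dmat gy).trace = ∑ a, (csize gy a : ℝ) * BR a a := by
    unfold Matrix.trace
    apply Finset.sum_congr rfl
    intro a _
    simp only [Matrix.diag_apply, Dmat, Matrix.mul_diagonal, Matrix.diagonal_mul]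
    have := hss a
    simp only [hs] at this ⊢
    linear_combination (BR a a) * this
  have hsumdR : ∑ m, dR m ≤ (L : ℝ) * n ^ 2 := by
    have h := congrArg Matrix.trace hQdec
    rw [htrQ, htrM] at h
    rw [← h]
    calc ∑ a, (csize gy a : ℝ) * BR a a
        ≤ ∑ a, (csize gy a : ℝ) * ((L : ℝ) * n) := by
          apply Finset.sum_le_sum
          intro a _
          exact mul_le_mul_of_nonneg_left (hBRdiag a) (Nat.cast_nonneg _)
      _ = (L : ℝ) * n ^ 2 := by
          rw [← Finset.sum_mul, hysum]; ring
  have hC : ∀ m, dR m ≤ c0 ^ 2 * L * n ^ 2 := by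
    intro m
    have h1 : dR m ≤ ∑ m', dR m' :=
      Finset.single_le_sum (fun m' _ => hd0 m') (Finset.mem_univ m)
    have h2 : (L : ℝ) * n ^ 2 ≤ c0 ^ 2 * L * n ^ 2 := by
      have hLn : (0:ℝ) ≤ (L : ℝ) * n ^ 2 := by positivity
      nlinarith [mul_nonneg (mul_nonneg (sub_nonneg.mpr hc0)
        (by linarith : (0:ℝ) ≤ c0 + 1)) hLn]
    linarith
  rw [ge_iff_le, hsum, ← key1, Finset.mul_sum]
  apply Finset.sum_le_sum
  intro m _
  exact mul_le_mul_of_nonneg_right (hC m) (sq_nonneg _)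
end
end
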